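/- arXiv:1401.2651 — 7 statements merged into one kernel-verified Lean document; each statement's English description precedes it below -/
import Mathlib

section
/- Schema Theorem (Holland). Consider one generation of a genetic algorithm with fitness-proportional selection, one-point crossover applied with probability p_c ∈ [0,1], and independent per-bit mutation with probability p_m ∈ [0,1], on bit strings of length ℓ ≥ 2. Each of the n offspring of generation t+1 is generated independently as follows: select two parents independently by fitness-proportional selection; with probability p_c choose a cut point k uniformly from {1,…,ℓ−1} and let the offspring take its bits at positions < k from the first parent and its bits at positions ≥ k from the second parent, and with probability 1−p_c let the offspring be a copy of the first parent; finally, independently flip each bit of the offspring with probability p_m. Then for every schema H with at least one fixed position and m(H,t) ≥ 1, the expected number m(H,t+1) of offspring matching H satisfies E(m(H,t+1)) ≥ (f(H,t)/f̄(t)) · m(H,t) · (1 − p_c·d(H)/(ℓ−1)) · (1 − p_m)^{o(H)}. -/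
/-- A bit string `A : Fin ℓ → Bool` matches (is an instance of) a schema
`H : Fin ℓ → Option Bool` if it agrees with `H` on every fixed position. -/
def SchemaMatches {ℓ : ℕ} (A : Fin ℓ → Bool) (H : Fin ℓ → Option Bool) : Prop :=
  ∀ i : Fin ℓ, ∀ b : Bool, H i = some b → A i = b

instance {ℓ : ℕ} (A : Fin ℓ → Bool) (H : Fin ℓ → Option Bool) :
    Decidable (SchemaMatches A H) :=
  inferInstanceAs (Decidable (∀ i : Fin ℓ, ∀ b : Bool, H i = some b → A i = b))

/-- The fixed positions of a schema: indices where `H` is not `∗`. -/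
def fixedPos {ℓ : ℕ} (H : Fin ℓ → Option Bool) : Finset (Fin ℓ) :=
  Finset.univ.filter (fun i => H i ≠ none)

/-- The order `o(H)`: the number of fixed positions. -/
def schemaOrder {ℓ : ℕ} (H : Fin ℓ → Option Bool) : ℕ := (fixedPos H).card

/-- The defining length `d(H)`: distance between the last and first fixed positions. -/
def defLength {ℓ : ℕ} (H : Fin ℓ → Option Bool) (h : (fixedPos H).Nonempty) : ℕ :=
  ((fixedPos H).max' h : ℕ) - ((fixedPos H).min' h : ℕ)
/-- Total fitness of the population. -/
def totalFit {ℓ n : ℕ} (P : Fin n → Fin ℓ → Bool) (f : (Fin ℓ → Bool) → ℝ) : ℝ :=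
  ∑ j, f (P j)

/-- Fitness-proportional selection probability of individual `j`. -/
noncomputable def selProb {ℓ n : ℕ} (P : Fin n → Fin ℓ → Bool)
    (f : (Fin ℓ → Bool) → ℝ) (j : Fin n) : ℝ :=
  f (P j) / totalFit P f

/-- The set of population members matching the schema `H`. -/
def matchSet {ℓ n : ℕ} (P : Fin n → Fin ℓ → Bool) (H : Fin ℓ → Option Bool) :
    Finset (Fin n) :=
  Finset.univ.filter (fun j => SchemaMatches (P j) H)

/-- `m(H,t)`: the number of population members matching `H`. -/
def mCount {ℓ n : ℕ} (P : Fin n → Fin ℓ → Bool) (H : Fin ℓ → Option Bool) : ℕ :=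
  (matchSet P H).card

/-- `f(H,t)`: the average fitness of the population members matching `H`
(`0` by convention if there are none, since `0/0 = 0` in Lean). -/
noncomputable def schemaFit {ℓ n : ℕ} (P : Fin n → Fin ℓ → Bool)
    (f : (Fin ℓ → Bool) → ℝ) (H : Fin ℓ → Option Bool) : ℝ :=
  (∑ j ∈ matchSet P H, f (P j)) / (mCount P H : ℝ)

/-- `f̄(t)`: the mean fitness of the population. -/
noncomputable def meanFit {ℓ n : ℕ} (P : Fin n → Fin ℓ → Bool)
    (f : (Fin ℓ → Bool) → ℝ) : ℝ :=
  totalFit P f / (n : ℝ)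

/-- `p(H,t)`: the probability that a fitness-proportionally selected individual
matches `H`. -/
noncomputable def pSel {ℓ n : ℕ} (P : Fin n → Fin ℓ → Bool)
    (f : (Fin ℓ → Bool) → ℝ) (H : Fin ℓ → Option Bool) : ℝ :=
  ∑ j ∈ matchSet P H, selProb P f j
/-- Apply a mutation mask `e` to a string `A`: the bit at `i` is flipped iff `e i = true`. -/
def mutate {ℓ : ℕ} (A e : Fin ℓ → Bool) : Fin ℓ → Bool :=
  fun i => Bool.xor (A i) (e i)

/-- The probability of the mutation mask `e` under independent per-bit mutation
with probability `p_m`. -/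
def mutWeight {ℓ : ℕ} (p_m : ℝ) (e : Fin ℓ → Bool) : ℝ :=
  ∏ i, if e i then p_m else 1 - p_m
/-- The random choices used to create one offspring: two parent indices, an optional
crossover cut (`some k` meaning the cut point `k+1 ∈ {1,…,ℓ-1}`, `none` meaning no
crossover), and a mutation mask. -/
abbrev GAChoice (ℓ n : ℕ) : Type :=
  Fin n × Fin n × Option (Fin (ℓ - 1)) × (Fin ℓ → Bool)

/-- The probability of an elementary choice: the parents are selected independently by
fitness-proportional selection, crossover happens with probability `p_c` with a cut point
uniform in `{1,…,ℓ-1}`, and the mutation mask has its independent per-bit probability. -/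
noncomputable def gaWeight {ℓ n : ℕ} (P : Fin n → Fin ℓ → Bool)
    (f : (Fin ℓ → Bool) → ℝ) (p_c p_m : ℝ) (x : GAChoice ℓ n) : ℝ :=
  selProb P f x.1 * selProb P f x.2.1 *
    (match x.2.2.1 with
      | none => 1 - p_c
      | some _ => p_c / ((ℓ : ℝ) - 1)) *
    mutWeight p_m x.2.2.2

/-- The offspring produced by an elementary choice: with no crossover, a copy of the
first parent; with a cut at `k = x.2.2.1+1`, the bits at positions `< k` come from the
first parent and those at positions `≥ k` from the second; finally the mutation mask
is applied. -/
def gaOffspring {ℓ n : ℕ} (P : Fin n → Fin ℓ → Bool) (x : GAChoice ℓ n) :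
    Fin ℓ → Bool :=
  mutate
    (match x.2.2.1 with
      | none => P x.1
      | some k => fun i => if (i : ℕ) < (k : ℕ) + 1 then P x.1 i else P x.2.1 i)
    x.2.2.2

/-- The probability that a single newly created offspring matches `H`. -/
noncomputable def matchProb {ℓ n : ℕ} (P : Fin n → Fin ℓ → Bool)
    (f : (Fin ℓ → Bool) → ℝ) (p_c p_m : ℝ) (H : Fin ℓ → Option Bool) : ℝ :=
  ∑ x : GAChoice ℓ n,
    gaWeight P f p_c p_m x * (if SchemaMatches (gaOffspring P x) H then 1 else 0)

/-- `E(m(H,t+1))`: the expected number of offspring matching `H` when the `n` offspring of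
generation `t+1` are created independently, computed over the product space of all the
random choices. -/
noncomputable def expCount {ℓ n : ℕ} (P : Fin n → Fin ℓ → Bool)
    (f : (Fin ℓ → Bool) → ℝ) (p_c p_m : ℝ) (H : Fin ℓ → Option Bool) : ℝ :=
  ∑ ω : Fin n → GAChoice ℓ n,
    (∏ i, gaWeight P f p_c p_m (ω i)) *
      ((Finset.univ.filter (fun i : Fin n => SchemaMatches (gaOffspring P (ω i)) H)).card : ℝ)

section SchemaAux

open Finset

variable {ℓ n : ℕ}

/-- Crossover weight as a standalone function. -/
noncomputable def cwW (ℓ : ℕ) (p_c : ℝ) : Option (Fin (ℓ - 1)) → ℝ :=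
  fun c => match c with
    | none => 1 - p_c
    | some _ => p_c / ((ℓ : ℝ) - 1)

lemma gaWeight_eq (P : Fin n → Fin ℓ → Bool) (f : (Fin ℓ → Bool) → ℝ) (p_c p_m : ℝ)
    (x : GAChoice ℓ n) :
    gaWeight P f p_c p_m x =
      selProb P f x.1 * selProb P f x.2.1 * cwW ℓ p_c x.2.2.1 * mutWeight p_m x.2.2.2 := rfl

lemma sum_prod4 {α β γ δ : Type*} [Fintype α] [Fintype β] [Fintype γ] [Fintype δ]
    (A : α → ℝ) (B : β → ℝ) (C : γ → ℝ) (D : δ → ℝ) :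
    ∑ x : α × β × γ × δ, A x.1 * B x.2.1 * C x.2.2.1 * D x.2.2.2 =
      (∑ a, A a) * (∑ b, B b) * (∑ c, C c) * (∑ d, D d) := by
  simp only [Fintype.sum_prod_type, ← Finset.sum_mul, ← Finset.mul_sum]

lemma sum_pi_bool (g : Fin ℓ → Bool → ℝ) :
    ∑ e : Fin ℓ → Bool, ∏ i, g i (e i) = ∏ i, (g i true + g i false) := by
  rw [show (Finset.univ : Finset (Fin ℓ → Bool)) = Fintype.piFinset (fun _ => Finset.univ)
    from (Fintype.piFinset_univ).symm, ← Finset.prod_univ_sum]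
  simp

lemma card_val_ge (m a : ℕ) :
    (Finset.univ.filter (fun k : Fin m => a ≤ (k : ℕ))).card = m - a := by
  rcases lt_or_ge a m with h | h
  · have : (Finset.univ.filter (fun k : Fin m => a ≤ (k : ℕ))) = Finset.Ici (⟨a, h⟩ : Fin m) := by
      ext k; simp [Fin.le_def]
    rw [this, Fin.card_Ici]
  · have : (Finset.univ.filter (fun k : Fin m => a ≤ (k : ℕ))) = ∅ := by
      ext k
      simp only [Finset.mem_filter, Finset.mem_univ, true_and, Finset.notMem_empty, iff_false]
      omega
    rw [this]
    simp
    omega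

lemma card_val_lt (m a : ℕ) (h : a ≤ m) :
    (Finset.univ.filter (fun k : Fin m => (k : ℕ) < a)).card = a := by
  rcases lt_or_eq_of_le h with h' | h'
  · have : (Finset.univ.filter (fun k : Fin m => (k : ℕ) < a)) = Finset.Iio (⟨a, h'⟩ : Fin m) := by
      ext k; simp [Fin.lt_def]
    rw [this, Fin.card_Iio]
  · have : (Finset.univ.filter (fun k : Fin m => (k : ℕ) < a)) = Finset.univ := by
      ext k
      simp only [Finset.mem_filter, Finset.mem_univ, true_and, iff_true]
      omega
    rw [this, Finset.card_univ, Fintype.card_fin, h']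


lemma totalFit_pos (P : Fin n → Fin ℓ → Bool) (f : (Fin ℓ → Bool) → ℝ)
    (hn : 0 < n) (hf : ∀ j, 0 < f (P j)) : 0 < totalFit P f :=
  Finset.sum_pos (fun j _ => hf j) ⟨⟨0, hn⟩, Finset.mem_univ _⟩

lemma sum_selProb (P : Fin n → Fin ℓ → Bool) (f : (Fin ℓ → Bool) → ℝ)
    (hT : totalFit P f ≠ 0) : ∑ j, selProb P f j = 1 := by
  rw [show (∑ j, selProb P f j) = (∑ j, f (P j)) / totalFit P f by
    rw [Finset.sum_div]; rfl]
  exact div_self hT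

lemma sum_selProb_match (P : Fin n → Fin ℓ → Bool) (f : (Fin ℓ → Bool) → ℝ)
    (H : Fin ℓ → Option Bool) :
    ∑ j, selProb P f j * (if SchemaMatches (P j) H then (1:ℝ) else 0) = pSel P f H := by
  rw [pSel, matchSet, Finset.sum_filter]
  congr 1
  funext j
  by_cases h : SchemaMatches (P j) H <;> simp [h]

lemma sum_mutWeight (p_m : ℝ) :
    ∑ e : Fin ℓ → Bool, mutWeight p_m e = 1 := by
  rw [show (∑ e : Fin ℓ → Bool, mutWeight p_m e)
      = ∏ i : Fin ℓ, (p_m + (1 - p_m))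
    from sum_pi_bool (fun (_ : Fin ℓ) (b : Bool) => if b then p_m else 1 - p_m)]
  simp

lemma sum_mutWeight_fixed (H : Fin ℓ → Option Bool) (p_m : ℝ) :
    ∑ e : Fin ℓ → Bool,
        mutWeight p_m e * (if (∀ i ∈ fixedPos H, e i = false) then (1:ℝ) else 0)
      = (1 - p_m) ^ schemaOrder H := by
  have h1 : ∀ e : Fin ℓ → Bool,
      mutWeight p_m e * (if (∀ i ∈ fixedPos H, e i = false) then (1:ℝ) else 0)
        = ∏ i, (fun i b => if b then (if H i = none then p_m else 0) else (1 - p_m)) i (e i) := by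
    intro e
    by_cases he : ∀ i ∈ fixedPos H, e i = false
    · rw [if_pos he, mul_one, mutWeight]
      apply Finset.prod_congr rfl
      intro i _
      by_cases hi : H i = none
      · cases hei : e i <;> simp [hei, hi]
      · have h2 : e i = false := he i (by simp [fixedPos, hi])
        simp [h2]
    · rw [if_neg he, mul_zero, eq_comm]
      push_neg at he
      obtain ⟨i0, hi0, hei0⟩ := he
      apply Finset.prod_eq_zero (Finset.mem_univ i0)
      have h3 : ¬ H i0 = none := by simpa [fixedPos] using hi0
      have h4 : e i0 = true := by
        cases h : e i0
        · exact absurd h hei0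
        · rfl
      simp [h4, h3]
  rw [show (∑ e : Fin ℓ → Bool,
        mutWeight p_m e * (if (∀ i ∈ fixedPos H, e i = false) then (1:ℝ) else 0))
      = ∏ i, ((if H i = none then p_m else 0) + (1 - p_m)) from
    (Finset.sum_congr rfl (fun e _ => h1 e)).trans
      (sum_pi_bool (fun i b => if b then (if H i = none then p_m else 0) else (1 - p_m)))]
  have h5 : ∀ i : Fin ℓ, ((if H i = none then p_m else 0) + (1 - p_m))
      = (if H i ≠ none then (1 - p_m) else 1) := by
    intro i
    by_cases h : H i = none <;> simp [h]
  simp_rw [h5]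
  rw [Finset.prod_ite, Finset.prod_const, Finset.prod_const_one, mul_one]
  rfl

lemma sum_cw (hℓ : 2 ≤ ℓ) (p_c : ℝ) :
    ∑ c : Option (Fin (ℓ - 1)), cwW ℓ p_c c = 1 := by
  have hL : ((ℓ : ℝ) - 1) ≠ 0 := by
    have : (2 : ℝ) ≤ (ℓ : ℝ) := by exact_mod_cast hℓ
    linarith
  rw [Fintype.sum_option]
  simp only [cwW, Finset.sum_const, Finset.card_univ, Fintype.card_fin, nsmul_eq_mul]
  have hc : ((ℓ - 1 : ℕ) : ℝ) = (ℓ : ℝ) - 1 := by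
    rw [Nat.cast_sub (by omega)]; norm_num
  rw [hc]
  field_simp
  ring

lemma sum_cw_none (p_c : ℝ) :
    ∑ c : Option (Fin (ℓ - 1)), cwW ℓ p_c c *
        (match c with | none => (1:ℝ) | some _ => 0) = 1 - p_c := by
  rw [Fintype.sum_option]
  simp [cwW]

lemma sum_cw_hi (hℓ : 2 ≤ ℓ) (p_c : ℝ) (a : ℕ) :
    ∑ c : Option (Fin (ℓ - 1)), cwW ℓ p_c c *
        (match c with | none => (0:ℝ) | some k => if a ≤ (k : ℕ) then 1 else 0)
      = p_c / ((ℓ : ℝ) - 1) * ((ℓ - 1 - a : ℕ) : ℝ) := by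
  rw [Fintype.sum_option]
  simp only [cwW, mul_zero, mul_ite, mul_one, zero_add]
  rw [Finset.sum_ite, Finset.sum_const, Finset.sum_const_zero, add_zero, nsmul_eq_mul,
    card_val_ge, mul_comm]

lemma sum_cw_lo (hℓ : 2 ≤ ℓ) (p_c : ℝ) (a : ℕ) (ha : a ≤ ℓ - 1) :
    ∑ c : Option (Fin (ℓ - 1)), cwW ℓ p_c c *
        (match c with | none => (0:ℝ) | some k => if (k : ℕ) < a then 1 else 0)
      = p_c / ((ℓ : ℝ) - 1) * (a : ℝ) := by
  rw [Fintype.sum_option]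
  simp only [cwW, mul_zero, mul_ite, mul_one, zero_add]
  rw [Finset.sum_ite, Finset.sum_const, Finset.sum_const_zero, add_zero, nsmul_eq_mul,
    card_val_lt _ _ ha, mul_comm]

lemma mutate_matches {H : Fin ℓ → Option Bool} {A e : Fin ℓ → Bool}
    (hA : SchemaMatches A H) (he : ∀ i ∈ fixedPos H, e i = false) :
    SchemaMatches (mutate A e) H := by
  intro i b hb
  have h1 : e i = false := he i (by simp [fixedPos, hb])
  simp [mutate, h1, hA i b hb]

lemma cross_hi_matches {H : Fin ℓ → Option Bool} (hfix : (fixedPos H).Nonempty)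
    {A B : Fin ℓ → Bool} {k : ℕ} (hA : SchemaMatches A H)
    (hk : (((fixedPos H).max' hfix : Fin ℓ) : ℕ) ≤ k) :
    SchemaMatches (fun i => if (i : ℕ) < k + 1 then A i else B i) H := by
  intro i b hb
  have hi : i ∈ fixedPos H := by simp [fixedPos, hb]
  have h2 : i ≤ (fixedPos H).max' hfix := Finset.le_max' _ i hi
  rw [Fin.le_def] at h2
  simp only [if_pos (by omega : (i : ℕ) < k + 1)]
  exact hA i b hb

lemma cross_lo_matches {H : Fin ℓ → Option Bool} (hfix : (fixedPos H).Nonempty)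
    {A B : Fin ℓ → Bool} {k : ℕ} (hB : SchemaMatches B H)
    (hk : k < (((fixedPos H).min' hfix : Fin ℓ) : ℕ)) :
    SchemaMatches (fun i => if (i : ℕ) < k + 1 then A i else B i) H := by
  intro i b hb
  have hi : i ∈ fixedPos H := by simp [fixedPos, hb]
  have h2 : (fixedPos H).min' hfix ≤ i := Finset.min'_le _ i hi
  rw [Fin.le_def] at h2
  simp only [if_neg (by omega : ¬ (i : ℕ) < k + 1)]
  exact hB i b hb

lemma selProb_nonneg (P : Fin n → Fin ℓ → Bool) (f : (Fin ℓ → Bool) → ℝ)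
    (hf : ∀ j, 0 < f (P j)) (hn : 0 < n) (j : Fin n) : 0 ≤ selProb P f j :=
  div_nonneg (le_of_lt (hf j)) (le_of_lt (totalFit_pos P f hn hf))

lemma mutWeight_nonneg {p_m : ℝ} (hpm : p_m ∈ Set.Icc (0:ℝ) 1) (e : Fin ℓ → Bool) :
    0 ≤ mutWeight p_m e := by
  apply Finset.prod_nonneg
  intro i _
  obtain ⟨h0, h1⟩ := hpm
  split <;> linarith

lemma cwW_nonneg (hℓ : 2 ≤ ℓ) {p_c : ℝ} (hpc : p_c ∈ Set.Icc (0:ℝ) 1)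
    (c : Option (Fin (ℓ - 1))) : 0 ≤ cwW ℓ p_c c := by
  obtain ⟨h0, h1⟩ := hpc
  have hL : (0 : ℝ) < (ℓ : ℝ) - 1 := by
    have : (2 : ℝ) ≤ (ℓ : ℝ) := by exact_mod_cast hℓ
    linarith
  cases c with
  | none => simp [cwW]; linarith
  | some k => exact div_nonneg h0 (le_of_lt hL)

end SchemaAux

section SchemaAux2
variable {ℓ n : ℕ}

lemma ind_nonneg (p : Prop) [Decidable p] : (0:ℝ) ≤ if p then 1 else 0 := by
  split <;> norm_num

lemma gaWeight_nonneg (hℓ : 2 ≤ ℓ) (hn : 0 < n) (P : Fin n → Fin ℓ → Bool)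
    (f : (Fin ℓ → Bool) → ℝ) (hf : ∀ j, 0 < f (P j)) {p_c p_m : ℝ}
    (hpc : p_c ∈ Set.Icc (0:ℝ) 1) (hpm : p_m ∈ Set.Icc (0:ℝ) 1) (x : GAChoice ℓ n) :
    0 ≤ gaWeight P f p_c p_m x := by
  rw [gaWeight_eq]
  exact mul_nonneg (mul_nonneg (mul_nonneg (selProb_nonneg P f hf hn _)
    (selProb_nonneg P f hf hn _)) (cwW_nonneg hℓ hpc _)) (mutWeight_nonneg hpm _)

lemma pointwise_bound (hℓ : 2 ≤ ℓ) (hn : 0 < n) (P : Fin n → Fin ℓ → Bool)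
    (f : (Fin ℓ → Bool) → ℝ) (hf : ∀ j, 0 < f (P j)) {p_c p_m : ℝ}
    (hpc : p_c ∈ Set.Icc (0:ℝ) 1) (hpm : p_m ∈ Set.Icc (0:ℝ) 1)
    (H : Fin ℓ → Option Bool) (hfix : (fixedPos H).Nonempty) (x : GAChoice ℓ n) :
    (selProb P f x.1 * (if SchemaMatches (P x.1) H then (1:ℝ) else 0)) * selProb P f x.2.1
        * (cwW ℓ p_c x.2.2.1 * (match x.2.2.1 with | none => (1:ℝ) | some _ => 0))
        * (mutWeight p_m x.2.2.2 *
            (if (∀ i ∈ fixedPos H, x.2.2.2 i = false) then (1:ℝ) else 0))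
      + (selProb P f x.1 * (if SchemaMatches (P x.1) H then (1:ℝ) else 0)) * selProb P f x.2.1
        * (cwW ℓ p_c x.2.2.1 * (match x.2.2.1 with
            | none => (0:ℝ)
            | some k => if (((fixedPos H).max' hfix : Fin ℓ) : ℕ) ≤ (k : ℕ) then 1 else 0))
        * (mutWeight p_m x.2.2.2 *
            (if (∀ i ∈ fixedPos H, x.2.2.2 i = false) then (1:ℝ) else 0))
      + selProb P f x.1 * (selProb P f x.2.1 * (if SchemaMatches (P x.2.1) H then (1:ℝ) else 0))
        * (cwW ℓ p_c x.2.2.1 * (match x.2.2.1 with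
            | none => (0:ℝ)
            | some k => if (k : ℕ) < (((fixedPos H).min' hfix : Fin ℓ) : ℕ) then 1 else 0))
        * (mutWeight p_m x.2.2.2 *
            (if (∀ i ∈ fixedPos H, x.2.2.2 i = false) then (1:ℝ) else 0))
      ≤ gaWeight P f p_c p_m x *
          (if SchemaMatches (gaOffspring P x) H then (1:ℝ) else 0) := by
  obtain ⟨j1, j2, c, e⟩ := x
  have hW := gaWeight_nonneg hℓ hn P f hf hpc hpm (j1, j2, c, e)
  have hRHS : (0:ℝ) ≤ gaWeight P f p_c p_m (j1, j2, c, e) *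
      (if SchemaMatches (gaOffspring P (j1, j2, c, e)) H then (1:ℝ) else 0) :=
    mul_nonneg hW (ind_nonneg _)
  by_cases hD : ∀ i ∈ fixedPos H, e i = false
  · have hDif : (if (∀ i ∈ fixedPos H, e i = false) then (1:ℝ) else 0) = 1 := if_pos hD
    cases c with
    | none =>
      by_cases h1 : SchemaMatches (P j1) H
      · have hoff : SchemaMatches (gaOffspring P (j1, j2, none, e)) H :=
          mutate_matches h1 hD
        simp [hDif, h1, hoff, gaWeight_eq]
      · simp [hDif, h1]
        first | simpa using hRHS | linarith [hRHS]
    | some k =>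
      by_cases hk1 : (((fixedPos H).max' hfix : Fin ℓ) : ℕ) ≤ (k : ℕ)
      · have hmn : (((fixedPos H).min' hfix : Fin ℓ) : ℕ) ≤
            (((fixedPos H).max' hfix : Fin ℓ) : ℕ) := by
          have h := Finset.min'_le (fixedPos H) _ (Finset.max'_mem (fixedPos H) hfix)
          rwa [Fin.le_def] at h
        have hk2 : ¬ ((k : ℕ) < (((fixedPos H).min' hfix : Fin ℓ) : ℕ)) := by omega
        by_cases h1 : SchemaMatches (P j1) H
        · have hoff : SchemaMatches (gaOffspring P (j1, j2, some k, e)) H :=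
            mutate_matches (cross_hi_matches hfix h1 hk1) hD
          simp [hDif, h1, hoff, hk1, hk2, gaWeight_eq]
        · simp [hDif, h1, hk2]
          first | simpa using hRHS | linarith [hRHS]
      · by_cases hk2 : (k : ℕ) < (((fixedPos H).min' hfix : Fin ℓ) : ℕ)
        · by_cases h2 : SchemaMatches (P j2) H
          · have hoff : SchemaMatches (gaOffspring P (j1, j2, some k, e)) H :=
              mutate_matches (cross_lo_matches hfix h2 (by omega)) hD
            simp [hDif, h2, hoff, hk1, hk2, gaWeight_eq]
          · simp [hDif, h2, hk1]
            first | simpa using hRHS | linarith [hRHS]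
        · simp [hDif, hk1, hk2]
          first | simpa using hRHS | linarith [hRHS]
  · have hDif : (if (∀ i ∈ fixedPos H, e i = false) then (1:ℝ) else 0) = 0 := if_neg hD
    simp [hDif]
    first | simpa using hRHS | linarith [hRHS]

end SchemaAux2

section SchemaAux3
variable {ℓ n : ℕ}

lemma sum_pi_fn {ι κ : Type*} [Fintype ι] [DecidableEq ι] [Fintype κ] (g : ι → κ → ℝ) :
    ∑ ω : ι → κ, ∏ i, g i (ω i) = ∏ i, ∑ x, g i x := by
  rw [show (Finset.univ : Finset (ι → κ)) = Fintype.piFinset (fun _ => Finset.univ)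
    from (Fintype.piFinset_univ).symm, ← Finset.prod_univ_sum]

lemma matchProb_ge (hℓ : 2 ≤ ℓ) (hn : 0 < n) (P : Fin n → Fin ℓ → Bool)
    (f : (Fin ℓ → Bool) → ℝ) (hf : ∀ j, 0 < f (P j)) {p_c p_m : ℝ}
    (hpc : p_c ∈ Set.Icc (0:ℝ) 1) (hpm : p_m ∈ Set.Icc (0:ℝ) 1)
    (H : Fin ℓ → Option Bool) (hfix : (fixedPos H).Nonempty) :
    pSel P f H * (1 - p_c * (defLength H hfix : ℝ) / ((ℓ:ℝ) - 1)) *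
        (1 - p_m) ^ schemaOrder H
      ≤ matchProb P f p_c p_m H := by
  have hT := (totalFit_pos P f hn hf).ne'
  have hL : (0:ℝ) < (ℓ:ℝ) - 1 := by
    have h2 : (2:ℝ) ≤ (ℓ:ℝ) := by exact_mod_cast hℓ
    linarith
  have key : (∑ j, selProb P f j * (if SchemaMatches (P j) H then (1:ℝ) else 0))
        * (∑ j, selProb P f j)
        * (∑ c : Option (Fin (ℓ - 1)), cwW ℓ p_c c *
            (match c with | none => (1:ℝ) | some _ => 0))
        * (∑ e : Fin ℓ → Bool, mutWeight p_m e *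
            (if (∀ i ∈ fixedPos H, e i = false) then (1:ℝ) else 0))
      + (∑ j, selProb P f j * (if SchemaMatches (P j) H then (1:ℝ) else 0))
        * (∑ j, selProb P f j)
        * (∑ c : Option (Fin (ℓ - 1)), cwW ℓ p_c c *
            (match c with
              | none => (0:ℝ)
              | some k => if (((fixedPos H).max' hfix : Fin ℓ) : ℕ) ≤ (k : ℕ) then 1 else 0))
        * (∑ e : Fin ℓ → Bool, mutWeight p_m e *
            (if (∀ i ∈ fixedPos H, e i = false) then (1:ℝ) else 0))
      + (∑ j, selProb P f j)
        * (∑ j, selProb P f j * (if SchemaMatches (P j) H then (1:ℝ) else 0))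
        * (∑ c : Option (Fin (ℓ - 1)), cwW ℓ p_c c *
            (match c with
              | none => (0:ℝ)
              | some k => if (k : ℕ) < (((fixedPos H).min' hfix : Fin ℓ) : ℕ) then 1 else 0))
        * (∑ e : Fin ℓ → Bool, mutWeight p_m e *
            (if (∀ i ∈ fixedPos H, e i = false) then (1:ℝ) else 0))
      ≤ matchProb P f p_c p_m H := by
    rw [matchProb, ← sum_prod4, ← sum_prod4, ← sum_prod4, ← Finset.sum_add_distrib,
      ← Finset.sum_add_distrib]
    exact Finset.sum_le_sum (fun x _ => pointwise_bound hℓ hn P f hf hpc hpm H hfix x)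
  rw [sum_selProb_match P f H, sum_selProb P f hT, sum_cw_none p_c,
    sum_cw_hi hℓ p_c _, sum_cw_lo hℓ p_c _ (by
      have := (((fixedPos H).min' hfix : Fin ℓ)).isLt
      omega), sum_mutWeight_fixed H p_m] at key
  refine le_trans (le_of_eq ?_) key
  have hmnx : (((fixedPos H).min' hfix : Fin ℓ) : ℕ) ≤
      (((fixedPos H).max' hfix : Fin ℓ) : ℕ) := by
    have h := Finset.min'_le (fixedPos H) _ (Finset.max'_mem (fixedPos H) hfix)
    rwa [Fin.le_def] at h
  have hmxl : (((fixedPos H).max' hfix : Fin ℓ) : ℕ) ≤ ℓ - 1 := by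
    have := (((fixedPos H).max' hfix : Fin ℓ)).isLt
    omega
  have hc1 : ((ℓ - 1 - (((fixedPos H).max' hfix : Fin ℓ) : ℕ) : ℕ) : ℝ)
      = ((ℓ:ℝ) - 1) - ((((fixedPos H).max' hfix : Fin ℓ) : ℕ) : ℝ) := by
    rw [Nat.cast_sub hmxl, Nat.cast_sub (by omega)]
    norm_num
  have hc2 : ((defLength H hfix : ℕ) : ℝ)
      = ((((fixedPos H).max' hfix : Fin ℓ) : ℕ) : ℝ)
        - ((((fixedPos H).min' hfix : Fin ℓ) : ℕ) : ℝ) := by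
    rw [defLength, Nat.cast_sub hmnx]
  rw [hc1, hc2]
  field_simp
  ring

lemma sum_gaWeight (hℓ : 2 ≤ ℓ) (hn : 0 < n) (P : Fin n → Fin ℓ → Bool)
    (f : (Fin ℓ → Bool) → ℝ) (hf : ∀ j, 0 < f (P j)) (p_c p_m : ℝ) :
    ∑ x : GAChoice ℓ n, gaWeight P f p_c p_m x = 1 := by
  have hT := (totalFit_pos P f hn hf).ne'
  rw [show (∑ x : GAChoice ℓ n, gaWeight P f p_c p_m x)
      = (∑ j, selProb P f j) * (∑ j, selProb P f j)
        * (∑ c : Option (Fin (ℓ - 1)), cwW ℓ p_c c)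
        * (∑ e : Fin ℓ → Bool, mutWeight p_m e)
    from (Finset.sum_congr rfl (fun x _ => gaWeight_eq P f p_c p_m x)).trans
      (sum_prod4 (selProb P f) (selProb P f) (cwW ℓ p_c) (mutWeight p_m)),
    sum_selProb P f hT, sum_cw hℓ, sum_mutWeight]
  norm_num

lemma expCount_eq (hℓ : 2 ≤ ℓ) (hn : 0 < n) (P : Fin n → Fin ℓ → Bool)
    (f : (Fin ℓ → Bool) → ℝ) (hf : ∀ j, 0 < f (P j)) (p_c p_m : ℝ)
    (H : Fin ℓ → Option Bool) :
    expCount P f p_c p_m H = n * matchProb P f p_c p_m H := by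
  classical
  rw [expCount]
  have h1 : ∀ ω : Fin n → GAChoice ℓ n,
      (((Finset.univ.filter
        (fun i : Fin n => SchemaMatches (gaOffspring P (ω i)) H)).card : ℝ))
        = ∑ i, (if SchemaMatches (gaOffspring P (ω i)) H then (1:ℝ) else 0) :=
    fun ω => (Finset.sum_boole _ _).symm
  simp_rw [h1, Finset.mul_sum]
  rw [Finset.sum_comm]
  have h2 : ∀ i : Fin n,
      (∑ ω : Fin n → GAChoice ℓ n, (∏ j, gaWeight P f p_c p_m (ω j)) *
        (if SchemaMatches (gaOffspring P (ω i)) H then (1:ℝ) else 0))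
      = matchProb P f p_c p_m H := by
    intro i
    have h3 : ∀ ω : Fin n → GAChoice ℓ n,
        (∏ j, gaWeight P f p_c p_m (ω j)) *
          (if SchemaMatches (gaOffspring P (ω i)) H then (1:ℝ) else 0)
        = ∏ j, (gaWeight P f p_c p_m (ω j) *
            (if j = i then (if SchemaMatches (gaOffspring P (ω j)) H then (1:ℝ) else 0)
              else 1)) := by
      intro ω
      rw [Finset.prod_mul_distrib, Finset.prod_ite_eq' Finset.univ i
        (fun j => if SchemaMatches (gaOffspring P (ω j)) H then (1:ℝ) else 0)]
      simp
    have h4 : ∀ j : Fin n, (∑ x : GAChoice ℓ n, gaWeight P f p_c p_m x *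
          (if j = i then (if SchemaMatches (gaOffspring P x) H then (1:ℝ) else 0) else 1))
        = if j = i then matchProb P f p_c p_m H else 1 := by
      intro j
      by_cases hj : j = i
      · subst hj
        simp only [if_pos rfl]
        rfl
      · simp only [if_neg hj, mul_one]
        exact sum_gaWeight hℓ hn P f hf p_c p_m
    rw [Finset.sum_congr rfl (fun ω _ => h3 ω),
      show (∑ ω : Fin n → GAChoice ℓ n, ∏ j, (gaWeight P f p_c p_m (ω j) *
          (if j = i then (if SchemaMatches (gaOffspring P (ω j)) H then (1:ℝ) else 0)
            else 1)))
        = ∏ j, ∑ x : GAChoice ℓ n, (gaWeight P f p_c p_m x *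
          (if j = i then (if SchemaMatches (gaOffspring P x) H then (1:ℝ) else 0) else 1))
      from sum_pi_fn (fun j x => gaWeight P f p_c p_m x *
          (if j = i then (if SchemaMatches (gaOffspring P x) H then (1:ℝ) else 0) else 1)),
      Finset.prod_congr rfl (fun j _ => h4 j),
      Finset.prod_ite_eq' Finset.univ i (fun _ => matchProb P f p_c p_m H)]
    simp
  rw [Finset.sum_congr rfl (fun i _ => h2 i), Finset.sum_const, Finset.card_univ,
    Fintype.card_fin, nsmul_eq_mul]

end SchemaAux3

/-- **Schema Theorem (Holland).** For a genetic algorithm with fitness-proportional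
selection, one-point crossover with probability `p_c` and independent per-bit mutation
with probability `p_m`, on bit strings of length `ℓ ≥ 2`, for every schema `H` with at
least one fixed position and at least one instance in the current population,
`E(m(H,t+1)) ≥ (f(H,t)/f̄(t)) · m(H,t) · (1 − p_c·d(H)/(ℓ−1)) · (1 − p_m)^{o(H)}`. -/
theorem schema_theorem {ℓ n : ℕ} (hℓ : 2 ≤ ℓ) (hn : 0 < n)
    (P : Fin n → Fin ℓ → Bool) (f : (Fin ℓ → Bool) → ℝ)
    (hf : ∀ j : Fin n, 0 < f (P j))
    (p_c p_m : ℝ) (hpc : p_c ∈ Set.Icc (0 : ℝ) 1) (hpm : p_m ∈ Set.Icc (0 : ℝ) 1)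
    (H : Fin ℓ → Option Bool) (hfix : (fixedPos H).Nonempty)
    (hm : 1 ≤ mCount P H) :
    expCount P f p_c p_m H ≥
      schemaFit P f H / meanFit P f * (mCount P H : ℝ) *
        (1 - p_c * (defLength H hfix : ℝ) / ((ℓ : ℝ) - 1)) *
        (1 - p_m) ^ schemaOrder H := by
  have hT := (totalFit_pos P f hn hf).ne'
  have hn0 : ((n : ℕ) : ℝ) ≠ 0 := by
    exact_mod_cast hn.ne'
  have hm0 : ((mCount P H : ℕ) : ℝ) ≠ 0 := by
    exact_mod_cast (by omega : mCount P H ≠ 0)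
  have hpSel : schemaFit P f H / meanFit P f * (mCount P H : ℝ) = (n : ℝ) * pSel P f H := by
    rw [schemaFit, meanFit, pSel,
      show (∑ j ∈ matchSet P H, selProb P f j)
        = (∑ j ∈ matchSet P H, f (P j)) / totalFit P f from by rw [Finset.sum_div]; rfl]
    field_simp
  rw [ge_iff_le, expCount_eq hℓ hn P f hf p_c p_m H, hpSel]
  calc (n : ℝ) * pSel P f H * (1 - p_c * (defLength H hfix : ℝ) / ((ℓ:ℝ) - 1)) *
        (1 - p_m) ^ schemaOrder H
      = (n : ℝ) * (pSel P f H * (1 - p_c * (defLength H hfix : ℝ) / ((ℓ:ℝ) - 1)) *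
          (1 - p_m) ^ schemaOrder H) := by ring
    _ ≤ (n : ℝ) * matchProb P f p_c p_m H :=
        mul_le_mul_of_nonneg_left (matchProb_ge hℓ hn P f hf hpc hpm H hfix)
          (Nat.cast_nonneg n)
end

section
/- Microscopic one-offspring Schema Theorem bound. In the one-generation genetic algorithm model (fitness-proportional selection of two independent parents; with probability p_c one-point crossover at a cut point k uniform in {1,…,ℓ−1}, the offspring taking positions < k from the first parent and positions ≥ k from the second, otherwise a copy of the first parent; then independent per-bit mutation with probability p_m), for every schema H with at least one fixed position, the probability that a single offspring matches H is at least p(H,t) · (1 − p_c·d(H)/(ℓ−1)) · (1 − p_m)^{o(H)}, where p(H,t) is the probability that a fitness-proportionally selected individual matches H. -/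
lemma mut_sum {ℓ : ℕ} (p_m : ℝ) (S : Finset (Fin ℓ)) :
    ∑ e : Fin ℓ → Bool, mutWeight p_m e *
      (if ∀ i ∈ S, e i = false then (1:ℝ) else 0) = (1 - p_m) ^ S.card := by
  have key : ∀ e : Fin ℓ → Bool, mutWeight p_m e *
      (if ∀ i ∈ S, e i = false then (1:ℝ) else 0) =
      ∏ i, ((if e i then p_m else 1 - p_m) *
        (if i ∈ S then (if e i then (0:ℝ) else 1) else 1)) := by
    intro e
    rw [Finset.prod_mul_distrib]
    congr 1
    by_cases h : ∀ i ∈ S, e i = false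
    · rw [if_pos h]
      rw [Finset.prod_eq_one]
      intro i _
      by_cases hi : i ∈ S
      · simp [hi, h i hi]
      · simp [hi]
    · rw [if_neg h]
      push_neg at h
      obtain ⟨i, hi, hei⟩ := h
      refine (Finset.prod_eq_zero (Finset.mem_univ i) ?_).symm
      simp [hi, hei]
  simp_rw [key]
  rw [← Fintype.piFinset_univ, ← Finset.prod_univ_sum
    (t := fun _ : Fin ℓ => (Finset.univ : Finset Bool))
    (f := fun i b => (if b then p_m else 1 - p_m) *
      (if i ∈ S then (if b then (0:ℝ) else 1) else 1))]
  have : ∀ i : Fin ℓ, (∑ b : Bool, ((if b then p_m else 1 - p_m) *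
      (if i ∈ S then (if b then (0:ℝ) else 1) else 1))) =
      if i ∈ S then 1 - p_m else 1 := by
    intro i
    rw [Fintype.sum_bool]
    by_cases hi : i ∈ S <;> simp [hi]
  simp_rw [this]
  rw [Finset.prod_ite_mem, Finset.univ_inter, Finset.prod_const]

lemma sum_cut_ge (m c : ℕ) (h : c ≤ m) :
    ∑ k : Fin m, (if c ≤ (k:ℕ) then (1:ℝ) else 0) = (m:ℝ) - c := by
  rw [Fin.sum_univ_eq_sum_range (fun k => if c ≤ k then (1:ℝ) else 0) m,
    Finset.sum_boole]
  have : (Finset.range m).filter (fun k => c ≤ k) = Finset.Ico c m := by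
    ext k; simp [Finset.mem_Ico]; omega
  rw [this, Nat.card_Ico]
  push_cast [h]
  ring

lemma sum_cut_lt (m c : ℕ) (h : c ≤ m) :
    ∑ k : Fin m, (if (k:ℕ) < c then (1:ℝ) else 0) = (c:ℝ) := by
  rw [Fin.sum_univ_eq_sum_range (fun k => if k < c then (1:ℝ) else 0) m,
    Finset.sum_boole]
  have : (Finset.range m).filter (fun k => k < c) = Finset.range c := by
    ext k; simp; omega
  rw [this, Finset.card_range]

/-- **Microscopic one-offspring Schema Theorem bound.** In the one-generation genetic
algorithm model (fitness-proportional selection of two independent parents; with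
probability `p_c` one-point crossover at a cut point uniform in `{1,…,ℓ−1}`, otherwise a
copy of the first parent; then independent per-bit mutation with probability `p_m`), for
every schema `H` with at least one fixed position, the probability that a single
offspring matches `H` is at least
`p(H,t) · (1 − p_c·d(H)/(ℓ−1)) · (1 − p_m)^{o(H)}`. -/
theorem microscopic_schema_bound {ℓ n : ℕ} (hℓ : 2 ≤ ℓ) (hn : 0 < n)
    (P : Fin n → Fin ℓ → Bool) (f : (Fin ℓ → Bool) → ℝ)
    (hf : ∀ j : Fin n, 0 < f (P j))
    (p_c p_m : ℝ) (hpc : p_c ∈ Set.Icc (0 : ℝ) 1) (hpm : p_m ∈ Set.Icc (0 : ℝ) 1)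
    (H : Fin ℓ → Option Bool) (hfix : (fixedPos H).Nonempty) :
    matchProb P f p_c p_m H ≥
      pSel P f H *
        (1 - p_c * (defLength H hfix : ℝ) / ((ℓ : ℝ) - 1)) *
        (1 - p_m) ^ schemaOrder H := by
  obtain ⟨hpc0, hpc1⟩ := hpc
  obtain ⟨hpm0, hpm1⟩ := hpm
  set a : ℕ := ((fixedPos H).min' hfix : ℕ) with ha
  set b : ℕ := ((fixedPos H).max' hfix : ℕ) with hb
  have hab : a ≤ b := by
    have := (fixedPos H).min'_le _ ((fixedPos H).max'_mem hfix)
    exact_mod_cast this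
  have hbl : b ≤ ℓ - 1 := by
    have := ((fixedPos H).max' hfix).isLt
    omega
  have hal : a ≤ ℓ - 1 := le_trans hab hbl
  have hL : (0:ℝ) < (ℓ:ℝ) - 1 := by
    have : (2:ℝ) ≤ (ℓ:ℝ) := by exact_mod_cast hℓ
    linarith
  have hT : 0 < totalFit P f :=
    Finset.sum_pos (fun j _ => hf j) ⟨⟨0, hn⟩, Finset.mem_univ _⟩
  have hs0 : ∀ j, 0 ≤ selProb P f j := fun j => div_nonneg (hf j).le hT.le
  have hs1 : ∑ j, selProb P f j = 1 := by
    simp only [selProb]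
    rw [← Finset.sum_div]
    have h0 : ∑ j, f (P j) = totalFit P f := rfl
    rw [h0]
    exact div_self hT.ne'
  set i1 : Fin n → ℝ := fun j => if SchemaMatches (P j) H then (1:ℝ) else 0 with hi1
  have hpSel : ∑ j, selProb P f j * i1 j = pSel P f H := by
    rw [pSel, matchSet, Finset.sum_filter]
    refine Finset.sum_congr rfl fun j _ => ?_
    by_cases h : SchemaMatches (P j) H <;> simp [hi1, h]
  set cw : Option (Fin (ℓ-1)) → ℝ := fun c => match c with
    | none => 1 - p_c
    | some _ => p_c / ((ℓ:ℝ) - 1) with hcw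
  set A : Fin n → Fin n → Option (Fin (ℓ-1)) → ℝ := fun j1 j2 c => match c with
    | none => i1 j1
    | some k => if b ≤ (k:ℕ) then i1 j1 else if (k:ℕ) < a then i1 j2 else 0 with hA
  set B : (Fin ℓ → Bool) → ℝ :=
    fun e => if ∀ i ∈ fixedPos H, e i = false then (1:ℝ) else 0 with hB
  have hmw0 : ∀ e : Fin ℓ → Bool, 0 ≤ mutWeight p_m e := by
    intro e
    refine Finset.prod_nonneg fun i _ => ?_
    split <;> linarith
  have hgwsplit : ∀ j1 j2 : Fin n, ∀ c : Option (Fin (ℓ-1)), ∀ e : Fin ℓ → Bool,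
      gaWeight P f p_c p_m (j1, j2, c, e)
        = selProb P f j1 * selProb P f j2 * cw c * mutWeight p_m e := by
    intro j1 j2 c e
    cases c <;> rfl
  have hgw0 : ∀ x : GAChoice ℓ n, 0 ≤ gaWeight P f p_c p_m x := by
    rintro ⟨j1, j2, c, e⟩
    rw [hgwsplit]
    have hcw0 : 0 ≤ cw c := by
      cases c
      · simp only [hcw]; linarith
      · simp only [hcw]; exact div_nonneg hpc0 hL.le
    exact mul_nonneg (mul_nonneg (mul_nonneg (hs0 j1) (hs0 j2)) hcw0) (hmw0 e)
  -- fixed positions facts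
  have hmemfix : ∀ i : Fin ℓ, ∀ bb : Bool, H i = some bb → i ∈ fixedPos H := by
    intro i bb hib
    simp [fixedPos, hib]
  have hle_b : ∀ i : Fin ℓ, i ∈ fixedPos H → (i:ℕ) ≤ b := by
    intro i hi
    exact_mod_cast (fixedPos H).le_max' i hi
  have ha_le : ∀ i : Fin ℓ, i ∈ fixedPos H → a ≤ (i:ℕ) := by
    intro i hi
    exact_mod_cast (fixedPos H).min'_le i hi
  -- Step 1: pointwise lower bound
  have step1 : matchProb P f p_c p_m H ≥
      ∑ x : GAChoice ℓ n, gaWeight P f p_c p_m x * (A x.1 x.2.1 x.2.2.1 * B x.2.2.2) := by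
    rw [ge_iff_le, matchProb]
    refine Finset.sum_le_sum ?_
    rintro ⟨j1, j2, c, e⟩ -
    refine mul_le_mul_of_nonneg_left ?_ (hgw0 _)
    show A j1 j2 c * B e ≤ _
    by_cases hBe : ∀ i ∈ fixedPos H, e i = false
    · have hB1 : B e = 1 := by simp only [hB]; exact if_pos hBe
      rw [hB1, mul_one]
      cases c with
      | none =>
        have hoff : ∀ i : Fin ℓ, gaOffspring P (j1, j2, none, e) i =
            Bool.xor (P j1 i) (e i) := fun i => rfl
        show i1 j1 ≤ _
        by_cases h1 : SchemaMatches (P j1) H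
        · have hm : SchemaMatches (gaOffspring P (j1, j2, none, e)) H := by
            intro i bb hib
            rw [hoff i, hBe i (hmemfix i bb hib), h1 i bb hib]
            simp
          simp [hi1, h1, hm]
        · simp only [hi1, if_neg h1]
          split <;> norm_num
      | some k =>
        have hoff : ∀ i : Fin ℓ, gaOffspring P (j1, j2, some k, e) i =
            Bool.xor (if (i : ℕ) < (k : ℕ) + 1 then P j1 i else P j2 i) (e i) :=
          fun i => rfl
        show (if b ≤ (k:ℕ) then i1 j1 else if (k:ℕ) < a then i1 j2 else 0) ≤ _
        by_cases h1 : b ≤ (k:ℕ)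
        · rw [if_pos h1]
          by_cases hm1 : SchemaMatches (P j1) H
          · have hm : SchemaMatches (gaOffspring P (j1, j2, some k, e)) H := by
              intro i bb hib
              have hib' := hmemfix i bb hib
              have : (i:ℕ) < (k:ℕ) + 1 := by have := hle_b i hib'; omega
              rw [hoff i, hBe i hib']
              simp only [this, if_true, hm1 i bb hib]
              simp
            simp [hi1, hm1, hm]
          · simp only [hi1, if_neg hm1]
            split <;> norm_num
        · rw [if_neg h1]
          by_cases h2 : (k:ℕ) < a
          · rw [if_pos h2]
            by_cases hm2 : SchemaMatches (P j2) H
            · have hm : SchemaMatches (gaOffspring P (j1, j2, some k, e)) H := by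
                intro i bb hib
                have hib' := hmemfix i bb hib
                have : ¬ ((i:ℕ) < (k:ℕ) + 1) := by have := ha_le i hib'; omega
                rw [hoff i, hBe i hib']
                simp only [this, if_false, hm2 i bb hib]
                simp
              simp [hi1, hm2, hm]
            · simp only [hi1, if_neg hm2]
              split <;> norm_num
          · rw [if_neg h2]
            split <;> norm_num
    · have hB0 : B e = 0 := by simp [hB, hBe]
      rw [hB0, mul_zero]
      split <;> norm_num
  -- Step 2: exact value of the lower-bound sum
  have hBsum : ∑ e : Fin ℓ → Bool, mutWeight p_m e * B e = (1 - p_m) ^ schemaOrder H := by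
    simp only [hB]
    exact mut_sum p_m (fixedPos H)
  have hopt : ∀ j1 j2 : Fin n, ∑ c : Option (Fin (ℓ-1)), cw c * A j1 j2 c =
      ((1 - p_c) + p_c / ((ℓ:ℝ)-1) * (((ℓ:ℝ)-1) - (b:ℝ))) * i1 j1
        + (p_c / ((ℓ:ℝ)-1) * (a:ℝ)) * i1 j2 := by
    intro j1 j2
    rw [Fintype.sum_option]
    have hsome : ∀ k : Fin (ℓ-1), cw (some k) * A j1 j2 (some k)
        = (p_c / ((ℓ:ℝ)-1) * i1 j1) * (if b ≤ (k:ℕ) then (1:ℝ) else 0)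
          + (p_c / ((ℓ:ℝ)-1) * i1 j2) * (if (k:ℕ) < a then (1:ℝ) else 0) := by
      intro k
      simp only [hcw, hA]
      by_cases h1 : b ≤ (k:ℕ)
      · have h2 : ¬ ((k:ℕ) < a) := by omega
        simp only [if_pos h1, if_neg h2]
        ring
      · by_cases h2 : (k:ℕ) < a
        · simp only [if_neg h1, if_pos h2]
          ring
        · simp only [if_neg h1, if_neg h2]
          ring
    simp_rw [hsome]
    rw [Finset.sum_add_distrib, ← Finset.mul_sum, ← Finset.mul_sum,
      sum_cut_ge (ℓ-1) b hbl, sum_cut_lt (ℓ-1) a hal]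
    have hc1 : ((ℓ-1 : ℕ) : ℝ) = (ℓ:ℝ) - 1 := by
      have : 1 ≤ ℓ := by omega
      push_cast [this]
      ring
    rw [hc1]
    show (1 - p_c) * i1 j1 + _ = _
    ring
  have key : (∑ x : GAChoice ℓ n, gaWeight P f p_c p_m x * (A x.1 x.2.1 x.2.2.1 * B x.2.2.2))
      = pSel P f H * (1 - p_c * (defLength H hfix : ℝ) / ((ℓ:ℝ)-1)) *
        (1 - p_m) ^ schemaOrder H := by
    rw [Fintype.sum_prod_type]
    simp only [Fintype.sum_prod_type]
    have h1 : ∀ j1 j2 : Fin n, ∀ c : Option (Fin (ℓ-1)),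
        (∑ e : Fin ℓ → Bool, gaWeight P f p_c p_m (j1, j2, c, e) * (A j1 j2 c * B e))
        = selProb P f j1 * selProb P f j2 * (cw c * A j1 j2 c) * (1 - p_m) ^ schemaOrder H := by
      intro j1 j2 c
      rw [← hBsum, Finset.mul_sum]
      refine Finset.sum_congr rfl fun e _ => ?_
      rw [hgwsplit]
      ring
    simp_rw [h1]
    have h2 : ∀ j1 j2 : Fin n,
        (∑ c : Option (Fin (ℓ-1)),
          selProb P f j1 * selProb P f j2 * (cw c * A j1 j2 c) * (1 - p_m) ^ schemaOrder H)
        = (selProb P f j1 * selProb P f j2 *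
            (((1 - p_c) + p_c / ((ℓ:ℝ)-1) * (((ℓ:ℝ)-1) - (b:ℝ))) * i1 j1
              + (p_c / ((ℓ:ℝ)-1) * (a:ℝ)) * i1 j2)) * (1 - p_m) ^ schemaOrder H := by
      intro j1 j2
      rw [← Finset.sum_mul]
      congr 1
      rw [← Finset.mul_sum, hopt]
    simp_rw [h2]
    have h3 : ∀ j1 : Fin n,
        (∑ j2, (selProb P f j1 * selProb P f j2 *
            (((1 - p_c) + p_c / ((ℓ:ℝ)-1) * (((ℓ:ℝ)-1) - (b:ℝ))) * i1 j1
              + (p_c / ((ℓ:ℝ)-1) * (a:ℝ)) * i1 j2)) * (1 - p_m) ^ schemaOrder H)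
        = ((((1 - p_c) + p_c / ((ℓ:ℝ)-1) * (((ℓ:ℝ)-1) - (b:ℝ))) * (selProb P f j1 * i1 j1)) * 1
            + (p_c / ((ℓ:ℝ)-1) * (a:ℝ) * selProb P f j1) * pSel P f H) *
            (1 - p_m) ^ schemaOrder H := by
      intro j1
      rw [← Finset.sum_mul]
      congr 1
      rw [← hs1, ← hpSel]
      rw [Finset.mul_sum, Finset.mul_sum, ← Finset.sum_add_distrib]
      refine Finset.sum_congr rfl fun j2 _ => ?_
      ring
    simp_rw [h3]
    rw [← Finset.sum_mul]
    congr 1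
    have h4 : ∀ j1 : Fin n,
        ((((1 - p_c) + p_c / ((ℓ:ℝ)-1) * (((ℓ:ℝ)-1) - (b:ℝ))) * (selProb P f j1 * i1 j1)) * 1
            + (p_c / ((ℓ:ℝ)-1) * (a:ℝ) * selProb P f j1) * pSel P f H)
        = ((1 - p_c) + p_c / ((ℓ:ℝ)-1) * (((ℓ:ℝ)-1) - (b:ℝ))) * (selProb P f j1 * i1 j1)
          + (p_c / ((ℓ:ℝ)-1) * (a:ℝ) * pSel P f H) * selProb P f j1 := by
      intro j1; ring
    simp_rw [h4]
    rw [Finset.sum_add_distrib, ← Finset.mul_sum, ← Finset.mul_sum, hpSel, hs1]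
    have hd : (defLength H hfix : ℝ) = (b:ℝ) - (a:ℝ) := by
      rw [defLength]
      rw [← ha, ← hb]
      push_cast [hab]
      ring
    rw [hd]
    field_simp
    ring
  calc matchProb P f p_c p_m H
      ≥ ∑ x : GAChoice ℓ n, gaWeight P f p_c p_m x * (A x.1 x.2.1 x.2.2.1 * B x.2.2.2) := step1
    _ = _ := key
end

section
/- Exact Schema Theorem for Genetic Algorithms. Consider one generation with fitness-proportional selection and one-point crossover and no mutation: each offspring is generated by selecting two parents independently by fitness-proportional selection; with probability 1−p_c the offspring is a copy of the first parent; with probability p_c a cut index i is chosen uniformly from {0,…,ℓ−1} and the offspring takes its bits at positions ≤ i from the first parent and its bits at positions > i from the second parent. For a schema H let L(H,i) be the schema obtained from H by replacing all entries at positions > i with `none`, and R(H,i) the schema obtained by replacing all entries at positions ≤ i with `none`. Then the total transmission probability α(H,t), i.e. the probability that a single newly created offspring matches H, equals α(H,t) = (1−p_c)·p(H,t) + (p_c/ℓ)·Σ_{i=0}^{ℓ−1} p(L(H,i),t)·p(R(H,i),t), and consequently E(m(H,t+1)) = n·α(H,t) when generation t+1 consists of n such independently generated offspring. -/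
/-- The random choices used to create one offspring with selection and one-point
crossover only: two parent indices and an optional crossover cut index `i ∈ {0,…,ℓ-1}`
(`none` meaning no crossover, i.e. a copy of the first parent). -/
abbrev XChoice (ℓ n : ℕ) : Type := Fin n × Fin n × Option (Fin ℓ)

/-- The probability of an elementary choice: the parents are selected independently by
fitness-proportional selection; with probability `1 - p_c` no crossover occurs, and with
probability `p_c` a cut index is chosen uniformly from `{0,…,ℓ-1}`. -/
noncomputable def xWeight {ℓ n : ℕ} (P : Fin n → Fin ℓ → Bool)
    (f : (Fin ℓ → Bool) → ℝ) (p_c : ℝ) (x : XChoice ℓ n) : ℝ :=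
  selProb P f x.1 * selProb P f x.2.1 *
    (match x.2.2 with
      | none => 1 - p_c
      | some _ => p_c / (ℓ : ℝ))

/-- The offspring produced by an elementary choice: a copy of the first parent if no
crossover occurs; otherwise, with cut index `i`, the bits at positions `≤ i` come from
the first parent and those at positions `> i` from the second parent. -/
def xOffspring {ℓ n : ℕ} (P : Fin n → Fin ℓ → Bool) (x : XChoice ℓ n) :
    Fin ℓ → Bool :=
  match x.2.2 with
  | none => P x.1
  | some i => fun j => if (j : ℕ) ≤ (i : ℕ) then P x.1 j else P x.2.1 j

/-- `α(H,t)`: the total transmission probability of `H`, i.e. the probability that a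
single newly created offspring matches `H`. -/
noncomputable def alpha {ℓ n : ℕ} (P : Fin n → Fin ℓ → Bool)
    (f : (Fin ℓ → Bool) → ℝ) (p_c : ℝ) (H : Fin ℓ → Option Bool) : ℝ :=
  ∑ x : XChoice ℓ n,
    xWeight P f p_c x * (if SchemaMatches (xOffspring P x) H then 1 else 0)

/-- `L(H,i)`: the schema obtained from `H` by replacing all entries at positions `> i`
with `none`. -/
def truncL {ℓ : ℕ} (H : Fin ℓ → Option Bool) (i : ℕ) : Fin ℓ → Option Bool :=
  fun j => if (j : ℕ) ≤ i then H j else none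

/-- `R(H,i)`: the schema obtained from `H` by replacing all entries at positions `≤ i`
with `none`. -/
def truncR {ℓ : ℕ} (H : Fin ℓ → Option Bool) (i : ℕ) : Fin ℓ → Option Bool :=
  fun j => if (j : ℕ) ≤ i then none else H j

/-- `E(m(H,t+1))`: the expected number of offspring matching `H` when generation `t+1`
consists of `n` independently created offspring, computed over the product space of all
the random choices. -/
noncomputable def xExpCount {ℓ n : ℕ} (P : Fin n → Fin ℓ → Bool)
    (f : (Fin ℓ → Bool) → ℝ) (p_c : ℝ) (H : Fin ℓ → Option Bool) : ℝ :=
  ∑ ω : Fin n → XChoice ℓ n,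
    (∏ i, xWeight P f p_c (ω i)) *
      ((Finset.univ.filter (fun i : Fin n => SchemaMatches (xOffspring P (ω i)) H)).card : ℝ)


private lemma ite_one_zero_and (p q : Prop) [Decidable p] [Decidable q] :
    (if p ∧ q then (1:ℝ) else 0) = (if p then (1:ℝ) else 0) * (if q then (1:ℝ) else 0) := by
  split_ifs with h1 h2 h3 <;> simp_all

private lemma crossMatch_iff {ℓ : ℕ} (A B : Fin ℓ → Bool) (H : Fin ℓ → Option Bool)
    (i : ℕ) :
    SchemaMatches (fun j => if (j : ℕ) ≤ i then A j else B j) H ↔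
      SchemaMatches A (truncL H i) ∧ SchemaMatches B (truncR H i) := by
  constructor
  · intro h
    constructor
    · intro j b hj
      unfold truncL at hj
      by_cases hji : (j : ℕ) ≤ i
      · have := h j b (by simpa [hji] using hj)
        simpa [hji] using this
      · simp [hji] at hj
    · intro j b hj
      unfold truncR at hj
      by_cases hji : (j : ℕ) ≤ i
      · simp [hji] at hj
      · have := h j b (by simpa [hji] using hj)
        simpa [hji] using this
  · rintro ⟨hL, hR⟩ j b hj
    by_cases hji : (j : ℕ) ≤ i
    · simpa [hji] using hL j b (by simp [truncL, hji, hj])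
    · simpa [hji] using hR j b (by simp [truncR, hji, hj])

/-- **Exact Schema Theorem for Genetic Algorithms.** With fitness-proportional selection
and one-point crossover (probability `p_c`, cut index uniform in `{0,…,ℓ−1}`) and no
mutation, the total transmission probability satisfies
`α(H,t) = (1−p_c)·p(H,t) + (p_c/ℓ)·Σ_{i=0}^{ℓ−1} p(L(H,i),t)·p(R(H,i),t)`,
and consequently `E(m(H,t+1)) = n·α(H,t)`. -/
theorem exact_schema_theorem {ℓ n : ℕ} (hℓ : 0 < ℓ) (hn : 0 < n)
    (P : Fin n → Fin ℓ → Bool) (f : (Fin ℓ → Bool) → ℝ)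
    (hf : ∀ j : Fin n, 0 < f (P j))
    (p_c : ℝ) (hpc : p_c ∈ Set.Icc (0 : ℝ) 1)
    (H : Fin ℓ → Option Bool) :
    alpha P f p_c H =
      (1 - p_c) * pSel P f H +
        p_c / (ℓ : ℝ) *
          ∑ i ∈ Finset.range ℓ, pSel P f (truncL H i) * pSel P f (truncR H i) ∧
    xExpCount P f p_c H = (n : ℝ) * alpha P f p_c H := by
  classical
  set sp : Fin n → ℝ := selProb P f with hsp
  have hT : (0:ℝ) < totalFit P f := by
    apply Finset.sum_pos (fun j _ => hf j)
    exact Finset.univ_nonempty_iff.mpr ⟨⟨0, hn⟩⟩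
  have hsum1 : ∑ j, sp j = 1 := by
    simp only [hsp, selProb, ← Finset.sum_div]
    exact div_self (by simpa [totalFit] using hT.ne')
  set IH : Fin n → ℝ := fun a => if SchemaMatches (P a) H then 1 else 0 with hIH
  set IL : ℕ → Fin n → ℝ := fun i a => if SchemaMatches (P a) (truncL H i) then 1 else 0
    with hIL
  set IR : ℕ → Fin n → ℝ := fun i a => if SchemaMatches (P a) (truncR H i) then 1 else 0
    with hIR
  have key : ∀ K : Fin ℓ → Option Bool,
      pSel P f K = ∑ j, sp j * (if SchemaMatches (P j) K then (1:ℝ) else 0) := by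
    intro K
    rw [pSel, matchSet, Finset.sum_filter]
    refine Finset.sum_congr rfl fun j _ => ?_
    split <;> simp [hsp]
  -- step 1: alpha as an explicit triple sum
  have h1 : alpha P f p_c H =
      ∑ a, ∑ b, (sp a * sp b * (1 - p_c) * IH a
        + ∑ i : Fin ℓ, sp a * sp b * (p_c / (ℓ:ℝ)) * (IL (i:ℕ) a * IR (i:ℕ) b)) := by
    simp only [hIH, hIL, hIR, hsp]
    rw [alpha, Fintype.sum_prod_type]
    refine Finset.sum_congr rfl fun a _ => ?_
    rw [Fintype.sum_prod_type]
    refine Finset.sum_congr rfl fun b _ => ?_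
    rw [Fintype.sum_option]
    simp only [xWeight, xOffspring]
    congr 1
    refine Finset.sum_congr rfl fun i _ => ?_
    congr 1
    rw [← ite_one_zero_and]
    exact if_congr (crossMatch_iff (P a) (P b) H (i:ℕ)) rfl rfl
  -- the first claim
  have hA : ∑ a, ∑ b, sp a * sp b * (1 - p_c) * IH a = (1 - p_c) * pSel P f H := by
    have : ∀ a : Fin n, ∑ b, sp a * sp b * (1 - p_c) * IH a
        = (1 - p_c) * (sp a * IH a) * ∑ b, sp b := by
      intro a
      rw [Finset.mul_sum]
      exact Finset.sum_congr rfl fun b _ => by ring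
    simp only [this, hsum1, mul_one]
    rw [key H, Finset.mul_sum]
  have hB : ∀ i : ℕ,
      ∑ a, ∑ b, sp a * sp b * (p_c / (ℓ:ℝ)) * (IL i a * IR i b)
        = p_c / (ℓ:ℝ) * (pSel P f (truncL H i) * pSel P f (truncR H i)) := by
    intro i
    rw [key, key, Finset.sum_mul_sum, Finset.mul_sum]
    refine Finset.sum_congr rfl fun a _ => ?_
    rw [Finset.mul_sum]
    exact Finset.sum_congr rfl fun b _ => by ring
  have halpha : alpha P f p_c H =
      (1 - p_c) * pSel P f H +
        p_c / (ℓ : ℝ) *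
          ∑ i ∈ Finset.range ℓ, pSel P f (truncL H i) * pSel P f (truncR H i) := by
    rw [h1]
    rw [Finset.sum_congr rfl fun a _ => Finset.sum_add_distrib, Finset.sum_add_distrib]
    have hB' : ∑ a, ∑ b, ∑ i : Fin ℓ, sp a * sp b * (p_c / (ℓ:ℝ)) * (IL (i:ℕ) a * IR (i:ℕ) b)
        = p_c / (ℓ : ℝ) *
          ∑ i ∈ Finset.range ℓ, pSel P f (truncL H i) * pSel P f (truncR H i) := by
      rw [Finset.mul_sum, ← Fin.sum_univ_eq_sum_range
        (fun i => p_c / (ℓ:ℝ) * (pSel P f (truncL H i) * pSel P f (truncR H i))) ℓ]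
      rw [show ∑ a, ∑ b, ∑ i : Fin ℓ, sp a * sp b * (p_c / (ℓ:ℝ)) * (IL (i:ℕ) a * IR (i:ℕ) b)
          = ∑ i : Fin ℓ, ∑ a, ∑ b, sp a * sp b * (p_c / (ℓ:ℝ)) * (IL (i:ℕ) a * IR (i:ℕ) b) by
        exact (Finset.sum_congr rfl fun a _ => Finset.sum_comm).trans Finset.sum_comm]
      exact Finset.sum_congr rfl fun i _ => hB (i:ℕ)
    rw [hA, hB']
  refine ⟨halpha, ?_⟩
  -- second claim
  have hw1 : ∑ x : XChoice ℓ n, xWeight P f p_c x = 1 := by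
    rw [Fintype.sum_prod_type]
    have : ∀ a : Fin n, ∑ x : Fin n × Option (Fin ℓ), xWeight P f p_c (a, x) = sp a := by
      intro a
      rw [Fintype.sum_prod_type]
      have : ∀ b : Fin n, ∑ c : Option (Fin ℓ), xWeight P f p_c (a, b, c) = sp a * sp b := by
        intro b
        rw [Fintype.sum_option]
        simp only [xWeight, hsp]
        rw [Finset.sum_const, Finset.card_univ, Fintype.card_fin, nsmul_eq_mul]
        have hℓ' : (ℓ:ℝ) ≠ 0 := Nat.cast_ne_zero.mpr hℓ.ne'
        field_simp
        ring
      simp only [this]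
      rw [← Finset.mul_sum, hsum1, mul_one]
    simp only [this, hsum1]
  have hcard : ∀ ω : Fin n → XChoice ℓ n,
      (((Finset.univ.filter
          (fun i : Fin n => SchemaMatches (xOffspring P (ω i)) H)).card : ℝ))
        = ∑ i : Fin n, (if SchemaMatches (xOffspring P (ω i)) H then (1:ℝ) else 0) := by
    intro ω
    rw [Finset.card_filter]
    push_cast
    exact Finset.sum_congr rfl fun i _ => by split <;> simp
  rw [xExpCount]
  simp only [hcard, Finset.mul_sum]
  rw [Finset.sum_comm]
  have hterm : ∀ k : Fin n,
      (∑ ω : Fin n → XChoice ℓ n, (∏ i, xWeight P f p_c (ω i)) *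
        (if SchemaMatches (xOffspring P (ω k)) H then (1:ℝ) else 0)) = alpha P f p_c H := by
    intro k
    have hrw : ∀ ω : Fin n → XChoice ℓ n,
        (∏ i, xWeight P f p_c (ω i)) *
          (if SchemaMatches (xOffspring P (ω k)) H then (1:ℝ) else 0)
        = ∏ i, (xWeight P f p_c (ω i) *
            (if i = k then (if SchemaMatches (xOffspring P (ω i)) H then (1:ℝ) else 0)
              else 1)) := by
      intro ω
      rw [Finset.prod_mul_distrib, Finset.prod_ite_eq' Finset.univ k
        (fun i => if SchemaMatches (xOffspring P (ω i)) H then (1:ℝ) else 0)]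
      simp
    simp only [hrw]
    rw [← Fintype.prod_sum
      (fun i (x : XChoice ℓ n) => xWeight P f p_c x *
        (if i = k then (if SchemaMatches (xOffspring P x) H then (1:ℝ) else 0) else 1))]
    rw [Finset.prod_eq_single k]
    · simp [alpha]
    · intro i _ hik
      simp [hik, hw1]
    · simp
  simp only [hterm]
  rw [Finset.sum_const, Finset.card_univ, Fintype.card_fin, nsmul_eq_mul]
end

section
/- Properties of the inverse threshold function ᾱ. Let n ≥ 1 be a natural number, let k > 0 and 0 ≤ x ≤ n be real numbers, and define ᾱ(k,x,n) = ( n(k²+2x) + k·√(n²k² + 4nx(n−x)) ) / ( 2n(k²+n) ). Then x/n ≤ ᾱ(k,x,n) ≤ 1, and for every real a with ᾱ(k,x,n) ≤ a ≤ 1, one has n·a − k·√(n·a·(1−a)) ≥ x. -/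
/-- Poli's inverse threshold function
`ᾱ(k,x,n) = (n(k²+2x) + k·√(n²k² + 4nx(n−x))) / (2n(k²+n))`,
the larger root of the quadratic `(na − x)² = k²·n·a·(1−a)` in `a`. -/
noncomputable def alphaBar (k x : ℝ) (n : ℕ) : ℝ :=
  ((n : ℝ) * (k ^ 2 + 2 * x) +
      k * Real.sqrt ((n : ℝ) ^ 2 * k ^ 2 + 4 * n * x * (n - x))) /
    (2 * n * (k ^ 2 + n))

/-- **Properties of the inverse threshold function `ᾱ`.** For `n ≥ 1`, `k > 0` and
`0 ≤ x ≤ n`, one has `x/n ≤ ᾱ(k,x,n) ≤ 1`, and for every `a` with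
`ᾱ(k,x,n) ≤ a ≤ 1`, `n·a − k·√(n·a·(1−a)) ≥ x`. -/
theorem alphaBar_properties (n : ℕ) (hn : 1 ≤ n) (k : ℝ) (hk : 0 < k)
    (x : ℝ) (hx0 : 0 ≤ x) (hxn : x ≤ n) :
    x / n ≤ alphaBar k x n ∧ alphaBar k x n ≤ 1 ∧
      ∀ a : ℝ, alphaBar k x n ≤ a → a ≤ 1 →
        x ≤ n * a - k * Real.sqrt (n * a * (1 - a)) := by
  have hN : (0:ℝ) < (n:ℝ) := by exact_mod_cast hn
  have hnx : (0:ℝ) ≤ (n:ℝ) - x := sub_nonneg.2 hxn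
  have hD0 : (0:ℝ) ≤ (n : ℝ) ^ 2 * k ^ 2 + 4 * n * x * (n - x) := by
    have := mul_nonneg (mul_nonneg (mul_nonneg (by norm_num : (0:ℝ) ≤ 4) hN.le) hx0) hnx
    nlinarith [sq_nonneg ((n:ℝ) * k)]
  set s := Real.sqrt ((n : ℝ) ^ 2 * k ^ 2 + 4 * n * x * (n - x)) with hsdef
  have hs0 : 0 ≤ s := Real.sqrt_nonneg _
  have hs2 : s ^ 2 = (n : ℝ) ^ 2 * k ^ 2 + 4 * n * x * (n - x) := Real.sq_sqrt hD0
  have hden : (0:ℝ) < 2 * n * (k ^ 2 + n) := by positivity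
  have hα : alphaBar k x n = ((n : ℝ) * (k ^ 2 + 2 * x) + k * s) / (2 * n * (k ^ 2 + n)) := rfl
  -- key lower bound on s
  have hks : k * (2 * x - n) ≤ s := by
    rcases le_or_gt (2 * x - (n:ℝ)) 0 with h | h
    · exact le_trans (mul_nonpos_of_nonneg_of_nonpos hk.le h) hs0
    · rw [hsdef]
      rw [show (k * (2 * x - (n:ℝ))) = Real.sqrt ((k * (2 * x - n)) ^ 2) from
        (Real.sqrt_sq (by positivity)).symm]
      apply Real.sqrt_le_sqrt
      nlinarith [mul_nonneg (mul_nonneg hx0 hnx) (sq_nonneg k), mul_nonneg hx0 hnx, hN.le]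
  -- key upper bound on k * s
  have hksu : k * s ≤ (n:ℝ) * k ^ 2 + 2 * n * (n - x) := by
    have hrhs : (0:ℝ) ≤ (n:ℝ) * k ^ 2 + 2 * n * (n - x) := by positivity
    have h1 : k * s = Real.sqrt (k ^ 2 * ((n : ℝ) ^ 2 * k ^ 2 + 4 * n * x * (n - x))) := by
      rw [hsdef, Real.sqrt_mul (sq_nonneg k), Real.sqrt_sq hk.le]
    rw [h1, show ((n:ℝ) * k ^ 2 + 2 * n * (n - x)) =
        Real.sqrt (((n:ℝ) * k ^ 2 + 2 * n * (n - x)) ^ 2) from (Real.sqrt_sq hrhs).symm]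
    apply Real.sqrt_le_sqrt
    nlinarith [mul_nonneg (mul_nonneg (mul_nonneg hN.le hnx) (sq_nonneg k)) hnx,
      mul_nonneg (mul_nonneg (mul_nonneg hN.le hnx) (sq_nonneg k)) (sub_nonneg.2 hxn),
      mul_nonneg (mul_nonneg hN.le hnx) (mul_nonneg hN.le hnx),
      mul_nonneg (mul_nonneg (mul_nonneg hN.le hnx) (sq_nonneg k)) hx0]
  have h1 : x / n ≤ alphaBar k x n := by
    rw [hα, div_le_div_iff₀ hN hden]
    nlinarith [mul_le_mul_of_nonneg_left hks (by positivity : (0:ℝ) ≤ k * n)]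
  have h2 : alphaBar k x n ≤ 1 := by
    rw [hα, div_le_one hden]
    nlinarith [hksu]
  refine ⟨h1, h2, ?_⟩
  intro a hαa ha1
  have hxa : x ≤ (n:ℝ) * a := by
    have := le_trans h1 hαa
    calc x = x / n * n := by field_simp
    _ ≤ a * n := by exact mul_le_mul_of_nonneg_right this hN.le
    _ = (n:ℝ) * a := mul_comm a n
  have ha0 : 0 ≤ a := le_trans (div_nonneg hx0 hN.le) (le_trans h1 hαa)
  have hq0 : (0:ℝ) ≤ (n:ℝ) * a * (1 - a) :=
    mul_nonneg (mul_nonneg hN.le ha0) (by linarith)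
  -- from ᾱ ≤ a derive the cleared inequality
  have hA : (n : ℝ) * (k ^ 2 + 2 * x) + k * s ≤ 2 * n * (k ^ 2 + n) * a := by
    rw [hα, div_le_iff₀ hden] at hαa
    linarith
  -- quadratic inequality: (na - x)^2 ≥ k^2 * n * a * (1-a)
  have hquad : k ^ 2 * ((n:ℝ) * a * (1 - a)) ≤ ((n:ℝ) * a - x) ^ 2 := by
    have hM : (0:ℝ) ≤ 2 * n * (k ^ 2 + n) * a - n * (k ^ 2 + 2 * x) - k * s := by linarith
    have hM' : (0:ℝ) ≤ 2 * n * (k ^ 2 + n) * a - n * (k ^ 2 + 2 * x) + k * s := by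
      nlinarith [mul_nonneg hk.le hs0]
    nlinarith [mul_nonneg hM hM', hs2, hN]
  have hsq : k * Real.sqrt ((n:ℝ) * a * (1 - a)) ≤ (n:ℝ) * a - x := by
    have h1' : k * Real.sqrt ((n:ℝ) * a * (1 - a)) =
        Real.sqrt (k ^ 2 * ((n:ℝ) * a * (1 - a))) := by
      rw [Real.sqrt_mul (sq_nonneg k), Real.sqrt_sq hk.le]
    rw [h1', show ((n:ℝ) * a - x) = Real.sqrt (((n:ℝ) * a - x) ^ 2) from
      (Real.sqrt_sq (by linarith)).symm]
    exact Real.sqrt_le_sqrt hquad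
  linarith
end

section
/- Conditional Probabilistic Schema Theorem (binomial core). Let n ≥ 1 be a natural number, k > 0 and 0 ≤ x ≤ n real numbers, and let ᾱ(k,x,n) = ( n(k²+2x) + k·√(n²k² + 4nx(n−x)) ) / ( 2n(k²+n) ). If X is binomially distributed with parameters n and a, where ᾱ(k,x,n) ≤ a ≤ 1, then P(X ≥ x) ≥ 1 − 1/k². -/
/-- The binomial probability mass function with parameters `n` and `a`:
`P(X = k) = C(n,k)·a^k·(1−a)^(n−k)`. -/
def binomPMF (n : ℕ) (a : ℝ) (k : ℕ) : ℝ :=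
  (n.choose k : ℝ) * a ^ k * (1 - a) ^ (n - k)

lemma binomPMF_nonneg (n m : ℕ) {a : ℝ} (h0 : 0 ≤ a) (h1 : a ≤ 1) :
    0 ≤ binomPMF n a m := by
  unfold binomPMF
  have h2 : (0:ℝ) ≤ 1 - a := by linarith
  positivity

lemma sum_binomPMF (n : ℕ) (a : ℝ) :
    ∑ m ∈ Finset.range (n + 1), binomPMF n a m = 1 := by
  have h : ∑ m ∈ Finset.range (n+1), a^m * (1-a)^(n-m) * (n.choose m : ℝ) = 1 := by
    rw [← add_pow]; norm_num
  rw [← h]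
  exact Finset.sum_congr rfl fun m _ => by unfold binomPMF; ring

lemma sum_mul_binomPMF (n : ℕ) (a : ℝ) :
    ∑ m ∈ Finset.range (n + 1), (m:ℝ) * binomPMF n a m = n * a := by
  induction n with
  | zero => simp [binomPMF]
  | succ n _ =>
    rw [Finset.sum_range_succ']
    have step : ∀ i ∈ Finset.range (n+1),
        ((i+1 : ℕ):ℝ) * binomPMF (n+1) a (i+1) = ((n:ℝ)+1) * a * binomPMF n a i := by
      intro i hi
      have hi' : i < n + 1 := Finset.mem_range.mp hi
      unfold binomPMF
      have hch : ((n+1) * Nat.choose n i : ℝ) = (Nat.choose (n+1) (i+1) : ℝ) * (i+1) := by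
        exact_mod_cast congrArg Nat.cast (Nat.add_one_mul_choose_eq n i)
      have hsub : n + 1 - (i+1) = n - i := by omega
      rw [hsub]
      push_cast
      linear_combination (-(a^i * a * (1-a)^(n-i))) * hch
    rw [Finset.sum_congr rfl step, ← Finset.mul_sum, sum_binomPMF]
    push_cast; ring

lemma sum_sqf_binomPMF (n : ℕ) (a : ℝ) :
    ∑ m ∈ Finset.range (n + 1), (m:ℝ) * ((m:ℝ) - 1) * binomPMF n a m
      = n * ((n:ℝ) - 1) * a^2 := by
  induction n with
  | zero => simp [binomPMF]
  | succ n _ =>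
    rw [Finset.sum_range_succ']
    have step : ∀ i ∈ Finset.range (n+1),
        ((i+1 : ℕ):ℝ) * (((i+1:ℕ):ℝ) - 1) * binomPMF (n+1) a (i+1)
          = ((n:ℝ)+1) * a * ((i:ℝ) * binomPMF n a i) := by
      intro i hi
      have hi' : i < n + 1 := Finset.mem_range.mp hi
      unfold binomPMF
      have hch : ((n+1) * Nat.choose n i : ℝ) = (Nat.choose (n+1) (i+1) : ℝ) * (i+1) := by
        exact_mod_cast congrArg Nat.cast (Nat.add_one_mul_choose_eq n i)
      have hsub : n + 1 - (i+1) = n - i := by omega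
      rw [hsub]
      push_cast
      linear_combination (-((i:ℝ) * a^i * a * (1-a)^(n-i))) * hch
    rw [Finset.sum_congr rfl step, ← Finset.mul_sum, sum_mul_binomPMF]
    push_cast; ring

lemma sum_var_binomPMF (n : ℕ) (a : ℝ) :
    ∑ m ∈ Finset.range (n + 1), ((m:ℝ) - n*a)^2 * binomPMF n a m
      = n * a * (1 - a) := by
  have expand : ∀ m ∈ Finset.range (n+1),
      ((m:ℝ) - n*a)^2 * binomPMF n a m
        = (m:ℝ) * ((m:ℝ) - 1) * binomPMF n a m
          + ((1 - 2*(n:ℝ)*a) * ((m:ℝ) * binomPMF n a m)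
            + ((n:ℝ)*a)^2 * binomPMF n a m) := by
    intro m _; ring
  rw [Finset.sum_congr rfl expand, Finset.sum_add_distrib, Finset.sum_add_distrib,
    ← Finset.mul_sum, ← Finset.mul_sum, sum_sqf_binomPMF, sum_mul_binomPMF, sum_binomPMF]
  ring

set_option maxHeartbeats 1000000 in
/-- **Conditional Probabilistic Schema Theorem (binomial core).** For `n ≥ 1`, `k > 0`
and `0 ≤ x ≤ n`, if `X` is binomially distributed with parameters `n` and `a`, where
`ᾱ(k,x,n) ≤ a ≤ 1`, then `P(X ≥ x) ≥ 1 − 1/k²`. -/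
theorem conditional_probabilistic_schema_theorem (n : ℕ) (hn : 1 ≤ n)
    (k : ℝ) (hk : 0 < k) (x : ℝ) (hx0 : 0 ≤ x) (hxn : x ≤ n)
    (a : ℝ) (ha₁ : alphaBar k x n ≤ a) (ha₂ : a ≤ 1) :
    1 - 1 / k ^ 2 ≤
      ∑ m ∈ (Finset.range (n + 1)).filter (fun m : ℕ => x ≤ (m : ℝ)),
        binomPMF n a m := by
  have hn' : (1:ℝ) ≤ (n:ℝ) := by exact_mod_cast hn
  set s := Real.sqrt ((n : ℝ) ^ 2 * k ^ 2 + 4 * n * x * (n - x)) with hs_def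
  have hsarg : (0:ℝ) ≤ (n : ℝ) ^ 2 * k ^ 2 + 4 * n * x * (n - x) := by
    have h1 : (0:ℝ) ≤ 4 * n * x * (n - x) := by
      apply mul_nonneg
      · positivity
      · linarith
    positivity
  have hs0 : 0 ≤ s := Real.sqrt_nonneg _
  have hs2 : s^2 = (n : ℝ) ^ 2 * k ^ 2 + 4 * n * x * (n - x) := Real.sq_sqrt hsarg
  have hsnk : (n:ℝ) * k ≤ s := by
    have h4 : (0:ℝ) ≤ 4 * n * x * (n - x) := by
      apply mul_nonneg
      · positivity
      · linarith
    have h5 : Real.sqrt (((n:ℝ)*k)^2) ≤ s := Real.sqrt_le_sqrt (by nlinarith)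
    rwa [Real.sqrt_sq (by positivity)] at h5
  have hden : (0:ℝ) < 2 * n * (k ^ 2 + n) := by positivity
  have key1 : (n:ℝ) * (k^2 + 2*x) + k * s ≤ 2 * n * (k^2 + n) * a := by
    rw [alphaBar, div_le_iff₀ hden] at ha₁
    linarith
  have hks : (n:ℝ) * k^2 ≤ k * s := by nlinarith [mul_le_mul_of_nonneg_left hsnk hk.le]
  have hxna : x ≤ (n:ℝ) * a := by nlinarith [key1, hks]
  have ha0 : 0 < a := by nlinarith [key1, hks]
  have hquad : k^2 * ((n:ℝ) * a * (1 - a)) ≤ ((n:ℝ)*a - x)^2 := by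
    have h1 : k * s ≤ 2 * n * (k^2 + n) * a - n * (k^2 + 2*x) := by linarith
    have hks0 : 0 ≤ k * s := mul_nonneg hk.le hs0
    have ht := mul_self_le_mul_self hks0 h1
    nlinarith [ht, hs2, mul_pos (mul_pos (by linarith : (0:ℝ) < (n:ℝ)) hk) hk]
  have hnn : ∀ m : ℕ, 0 ≤ binomPMF n a m := fun m => binomPMF_nonneg n m ha0.le ha₂
  have hsplit :
      (∑ m ∈ (Finset.range (n + 1)).filter (fun m : ℕ => x ≤ (m : ℝ)), binomPMF n a m)
      + (∑ m ∈ (Finset.range (n + 1)).filter (fun m : ℕ => ¬ x ≤ (m : ℝ)), binomPMF n a m)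
      = 1 := by
    rw [Finset.sum_filter_add_sum_filter_not]
    exact sum_binomPMF n a
  by_cases hae : a = 1
  · subst hae
    have hmem : n ∈ (Finset.range (n + 1)).filter (fun m : ℕ => x ≤ (m : ℝ)) := by
      simp [Finset.mem_filter, hxn]
    have hone : binomPMF n 1 n = 1 := by simp [binomPMF]
    have hle : (1:ℝ) ≤ ∑ m ∈ (Finset.range (n + 1)).filter (fun m : ℕ => x ≤ (m : ℝ)),
        binomPMF n 1 m := by
      have := Finset.single_le_sum (f := binomPMF n 1) (fun m _ => hnn m) hmem
      rw [hone] at this; exact this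
    have hkpos : (0:ℝ) < 1 / k^2 := by positivity
    linarith
  · have ha1 : a < 1 := lt_of_le_of_ne ha₂ hae
    have hσ : 0 < (n:ℝ) * a * (1 - a) := by
      apply mul_pos (mul_pos (by linarith) ha0); linarith
    have hcheb : k^2 * ((n:ℝ) * a * (1 - a))
        * ∑ m ∈ (Finset.range (n + 1)).filter (fun m : ℕ => ¬ x ≤ (m : ℝ)), binomPMF n a m
        ≤ (n:ℝ) * a * (1 - a) := by
      rw [Finset.mul_sum]
      calc ∑ m ∈ (Finset.range (n + 1)).filter (fun m : ℕ => ¬ x ≤ (m : ℝ)),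
              k^2 * ((n:ℝ) * a * (1 - a)) * binomPMF n a m
          ≤ ∑ m ∈ (Finset.range (n + 1)).filter (fun m : ℕ => ¬ x ≤ (m : ℝ)),
              ((m:ℝ) - n*a)^2 * binomPMF n a m := by
            apply Finset.sum_le_sum
            intro m hm
            have hmx : (m:ℝ) < x := by
              have := (Finset.mem_filter.mp hm).2
              exact lt_of_not_ge this
            have hsq : k^2 * ((n:ℝ) * a * (1 - a)) ≤ ((m:ℝ) - n*a)^2 := by
              nlinarith [hquad, hxna]
            exact mul_le_mul_of_nonneg_right hsq (hnn m)
        _ ≤ ∑ m ∈ Finset.range (n + 1), ((m:ℝ) - n*a)^2 * binomPMF n a m := by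
            apply Finset.sum_le_sum_of_subset_of_nonneg (Finset.filter_subset _ _)
            intro m _ _
            exact mul_nonneg (sq_nonneg _) (hnn m)
        _ = (n:ℝ) * a * (1 - a) := sum_var_binomPMF n a
    set SG := ∑ m ∈ (Finset.range (n + 1)).filter (fun m : ℕ => ¬ x ≤ (m : ℝ)),
        binomPMF n a m with hSGdef
    set SF := ∑ m ∈ (Finset.range (n + 1)).filter (fun m : ℕ => x ≤ (m : ℝ)),
        binomPMF n a m with hSFdef
    have hGle : SG ≤ 1 / k^2 := by
      rw [le_div_iff₀ (by positivity : (0:ℝ) < k^2)]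
      nlinarith [hcheb, hσ]
    linarith
end

section
/- One-point crossover disruption lemma. Let H : Fin ℓ → Option Bool be a schema with at least one fixed position, let a be its smallest fixed position and c its largest fixed position. Let A, B : Fin ℓ → Bool with A matching H, and let k ∈ {1,…,ℓ−1} be a cut point. Define the two offspring A' and B' by A' i = A i for i < k and A' i = B i for i ≥ k, and B' i = B i for i < k and B' i = A i for i ≥ k. If k > c then A' matches H, and if k ≤ a then B' matches H. Consequently, whenever the cut point k lies outside the set {a+1,…,c} of d(H) = c − a disruptive positions, at least one of the two offspring matches H. -/
/-- **One-point crossover disruption lemma.** Let `H` be a schema with at least one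
fixed position, `a` its smallest and `c` its largest fixed position, let `A` match `H`,
and let `k ∈ {1,…,ℓ−1}` be a cut point. Let `A'` take positions `< k` from `A` and `≥ k`
from `B`, and let `B'` take positions `< k` from `B` and `≥ k` from `A`. If `k > c` then
`A'` matches `H`; if `k ≤ a` then `B'` matches `H`; consequently, whenever `k` lies
outside the set `{a+1,…,c}` of `d(H) = c − a` disruptive positions, at least one of the
two offspring matches `H`. -/
theorem one_point_crossover_disruption {ℓ : ℕ} (H : Fin ℓ → Option Bool)
    (hfix : (fixedPos H).Nonempty) (A B : Fin ℓ → Bool) (hA : SchemaMatches A H)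
    (k : ℕ) (hk1 : 1 ≤ k) (hk2 : k ≤ ℓ - 1) :
    ((((fixedPos H).max' hfix : ℕ) < k) →
        SchemaMatches (fun i : Fin ℓ => if (i : ℕ) < k then A i else B i) H) ∧
    ((k ≤ ((fixedPos H).min' hfix : ℕ)) →
        SchemaMatches (fun i : Fin ℓ => if (i : ℕ) < k then B i else A i) H) ∧
    ((k ∉ Finset.Icc (((fixedPos H).min' hfix : ℕ) + 1) ((fixedPos H).max' hfix : ℕ)) →
        SchemaMatches (fun i : Fin ℓ => if (i : ℕ) < k then A i else B i) H ∨
          SchemaMatches (fun i : Fin ℓ => if (i : ℕ) < k then B i else A i) H) := by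

  have hmem : ∀ i : Fin ℓ, ∀ b : Bool, H i = some b → i ∈ fixedPos H := by
    intro i b hb
    simp [fixedPos, hb]
  have h1 : ((fixedPos H).max' hfix : ℕ) < k →
      SchemaMatches (fun i : Fin ℓ => if (i : ℕ) < k then A i else B i) H := by
    intro hlt i b hb
    have : (i : ℕ) ≤ ((fixedPos H).max' hfix : ℕ) :=
      Fin.le_iff_val_le_val.mp (Finset.le_max' _ _ (hmem i b hb))
    simp only []
    rw [if_pos (lt_of_le_of_lt this hlt)]
    exact hA i b hb
  have h2 : k ≤ ((fixedPos H).min' hfix : ℕ) →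
      SchemaMatches (fun i : Fin ℓ => if (i : ℕ) < k then B i else A i) H := by
    intro hle i b hb
    have : ((fixedPos H).min' hfix : ℕ) ≤ (i : ℕ) :=
      Fin.le_iff_val_le_val.mp (Finset.min'_le _ _ (hmem i b hb))
    simp only []
    rw [if_neg (not_lt.mpr (le_trans hle this))]
    exact hA i b hb
  refine ⟨h1, h2, fun hnot => ?_⟩
  rw [Finset.mem_Icc, not_and_or, not_le, not_le] at hnot
  rcases hnot with h | h
  · exact Or.inr (h2 (Nat.lt_succ_iff.mp h))
  · exact Or.inl (h1 h)
end

section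
/- Mutation survival probability. Let H : Fin ℓ → Option Bool be a schema and A : Fin ℓ → Bool a string matching H. Apply bitwise mutation to A: independently for each position i, flip the bit A i with probability p_m ∈ [0,1] and leave it unchanged with probability 1 − p_m. Then the probability that the mutated string still matches H is exactly (1 − p_m)^{o(H)}, where o(H) is the order of H; in particular it is at least (1 − p_m)^{o(H)}. -/
/-- The probability that the string obtained from `A` by independent per-bit mutation
with probability `p_m` matches the schema `H`, computed as a sum over all mutation
masks. -/
def mutMatchProb {ℓ : ℕ} (p_m : ℝ) (A : Fin ℓ → Bool) (H : Fin ℓ → Option Bool) : ℝ :=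
  ∑ e ∈ Finset.univ.filter (fun e : Fin ℓ → Bool => SchemaMatches (mutate A e) H),
    mutWeight p_m e

/-- **Mutation survival probability.** If `A` matches the schema `H` and each bit of `A`
is flipped independently with probability `p_m ∈ [0,1]`, then the probability that the
mutated string still matches `H` is exactly `(1 − p_m)^{o(H)}`; in particular it is at
least `(1 − p_m)^{o(H)}`. -/
theorem mutation_survival_probability {ℓ : ℕ} (H : Fin ℓ → Option Bool)
    (A : Fin ℓ → Bool) (hA : SchemaMatches A H)
    (p_m : ℝ) (hpm : p_m ∈ Set.Icc (0 : ℝ) 1) :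
    mutMatchProb p_m A H = (1 - p_m) ^ schemaOrder H ∧
      (1 - p_m) ^ schemaOrder H ≤ mutMatchProb p_m A H := by
  have key : mutMatchProb p_m A H = (1 - p_m) ^ schemaOrder H := by
    -- characterize the matching condition
    have hmatch : ∀ e : Fin ℓ → Bool,
        SchemaMatches (mutate A e) H ↔ ∀ i ∈ fixedPos H, e i = false := by
      intro e
      constructor
      · intro h i hi
        simp only [fixedPos, Finset.mem_filter] at hi
        obtain ⟨-, hne⟩ := hi
        obtain ⟨b, hb⟩ := Option.ne_none_iff_exists'.mp hne
        have h1 := h i b hb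
        have h2 := hA i b hb
        simp only [mutate, h2] at h1
        cases b <;> cases h1' : e i <;> simp_all
      · intro h i b hb
        have h2 := hA i b hb
        have he : e i = false := by
          apply h
          simp [fixedPos, hb]
        simp [mutate, he, h2]
    set g : Fin ℓ → Bool → ℝ := fun i b =>
      if i ∈ fixedPos H ∧ b then 0 else (if b then p_m else 1 - p_m) with hg
    have hsum : mutMatchProb p_m A H = ∑ e : Fin ℓ → Bool, ∏ i, g i (e i) := by
      rw [mutMatchProb, Finset.sum_filter]
      apply Finset.sum_congr rfl
      intro e _
      by_cases h : SchemaMatches (mutate A e) H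
      · rw [if_pos h, mutWeight]
        apply Finset.prod_congr rfl
        intro i _
        have : ¬ (i ∈ fixedPos H ∧ e i) := by
          rintro ⟨hi, hei⟩
          rw [(hmatch e).mp h i hi] at hei
          exact Bool.false_ne_true hei
        simp [hg, this]
      · rw [if_neg h]
        have hex : ∃ i ∈ fixedPos H, e i = true := by
          by_contra hc
          push_neg at hc
          exact h ((hmatch e).mpr (fun i hi => by
            have := hc i hi
            simpa using this))
        obtain ⟨i, hi, hei⟩ := hex
        refine (Finset.prod_eq_zero (Finset.mem_univ i) ?_).symm
        simp [hg, hi, hei]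
    rw [hsum, ← Fintype.prod_sum g]
    have : ∀ i : Fin ℓ, ∑ b : Bool, g i b =
        if i ∈ fixedPos H then (1 - p_m) else 1 := by
      intro i
      by_cases hi : i ∈ fixedPos H <;> simp [hg, hi, Fintype.sum_bool] <;> ring
    rw [Finset.prod_congr rfl (fun i _ => this i), Finset.prod_ite, Finset.prod_const,
      Finset.prod_const_one, mul_one, Finset.filter_univ_mem]
    rfl
  exact ⟨key, key.ge⟩
end
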